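/- Suppose A ∈ ℂ^{N,N} satisfies the L^p-dissipativity condition for some 1 < p < ∞ and ℂ-scalars, i.e., |z|² Re⟨w, Aw⟩ + (p−2) Re⟨w,z⟩ Re⟨z, Aw⟩ ≥ γ_A |z|²|w|² for all z, w ∈ ℂ^N with some γ_A > 0. Then the real representation 𝐀 ∈ ℝ^{2N,2N} of A satisfies the analogous condition over ℝ^{2N} with the same constant γ_A: |z|² ⟨w, 𝐀w⟩ + (p−2) ⟨w,z⟩ ⟨z, 𝐀w⟩ ≥ γ_A |z|²|w|² for all z, w ∈ ℝ^{2N}. -/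

import Mathlib

open Matrix

private noncomputable def toC {N : ℕ} (v : Fin N ⊕ Fin N → ℝ) : EuclideanSpace ℂ (Fin N) :=
  WithLp.toLp 2 (fun j => (⟨v (Sum.inl j), v (Sum.inr j)⟩ : ℂ))

private lemma toC_norm_sq {N : ℕ} (v : EuclideanSpace ℝ (Fin N ⊕ Fin N)) :
    ‖toC (v : Fin N ⊕ Fin N → ℝ)‖ ^ 2 = ‖v‖ ^ 2 := by
  rw [EuclideanSpace.norm_eq, EuclideanSpace.norm_eq,
    Real.sq_sqrt (by positivity), Real.sq_sqrt (by positivity)]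
  rw [Fintype.sum_sum_type]
  simp only [toC, WithLp.ofLp_toLp, Complex.sq_norm, Complex.normSq_mk, Real.norm_eq_abs,
    sq_abs]
  rw [← Finset.sum_add_distrib]
  congr 1
  ext j
  ring

private lemma dot_re {N : ℕ} (v u : Fin N ⊕ Fin N → ℝ) :
    (star (toC v : Fin N → ℂ) ⬝ᵥ (toC u : Fin N → ℂ)).re = v ⬝ᵥ u := by
  simp only [dotProduct, Complex.re_sum, Fintype.sum_sum_type]
  rw [← Finset.sum_add_distrib]
  refine Finset.sum_congr rfl fun j _ => ?_
  simp [toC, Complex.mul_re, Pi.star_apply, RCLike.star_def, Complex.conj_re, Complex.conj_im]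

private lemma dot_mulVec_re {N : ℕ} (A₁ A₂ : Matrix (Fin N) (Fin N) ℝ)
    (v u : Fin N ⊕ Fin N → ℝ) :
    (star (toC v : Fin N → ℂ) ⬝ᵥ
      (A₁.map Complex.ofReal + Complex.I • A₂.map Complex.ofReal).mulVec (toC u)).re
    = v ⬝ᵥ (Matrix.fromBlocks A₁ (-A₂) A₂ A₁).mulVec u := by
  simp only [dotProduct, mulVec, Finset.mul_sum, Complex.re_sum, Fintype.sum_sum_type,
    fromBlocks_apply₁₁, fromBlocks_apply₁₂, fromBlocks_apply₂₁, fromBlocks_apply₂₂]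
  rw [← Finset.sum_add_distrib]
  refine Finset.sum_congr rfl fun j _ => ?_
  simp only [mul_add, Finset.mul_sum, ← Finset.sum_add_distrib]
  refine Finset.sum_congr rfl fun k _ => ?_
  simp [toC, Complex.mul_re, Complex.mul_im, Pi.star_apply, RCLike.star_def,
    Complex.conj_re, Complex.conj_im, Matrix.add_apply, Matrix.smul_apply, Matrix.map_apply,
    smul_eq_mul]
  ring

/-- If `A ∈ ℂ^{N,N}` satisfies the `L^p`-dissipativity condition with constant `γ_A`,
then its real representation `𝐀 ∈ ℝ^{2N,2N}` satisfies the analogous real condition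
with the same constant. -/
theorem Lp_dissipativity_real_representation
    (N : ℕ) (A₁ A₂ : Matrix (Fin N) (Fin N) ℝ) (p : ℝ) (hp1 : 1 < p)
    (γA : ℝ) (hγ : 0 < γA)
    (hdiss : ∀ z w : EuclideanSpace ℂ (Fin N),
      γA * ‖z‖ ^ 2 * ‖w‖ ^ 2 ≤
        ‖z‖ ^ 2 * (star (w : Fin N → ℂ) ⬝ᵥ
            (A₁.map Complex.ofReal + Complex.I • A₂.map Complex.ofReal).mulVec w).re
          + (p - 2) * (star (w : Fin N → ℂ) ⬝ᵥ (z : Fin N → ℂ)).re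
              * (star (z : Fin N → ℂ) ⬝ᵥ
                  (A₁.map Complex.ofReal + Complex.I • A₂.map Complex.ofReal).mulVec w).re) :
    ∀ z w : EuclideanSpace ℝ (Fin N ⊕ Fin N),
      γA * ‖z‖ ^ 2 * ‖w‖ ^ 2 ≤
        ‖z‖ ^ 2 * ((w : Fin N ⊕ Fin N → ℝ) ⬝ᵥ (Matrix.fromBlocks A₁ (-A₂) A₂ A₁).mulVec w)
          + (p - 2) * ((w : Fin N ⊕ Fin N → ℝ) ⬝ᵥ (z : Fin N ⊕ Fin N → ℝ))
              * ((z : Fin N ⊕ Fin N → ℝ) ⬝ᵥ (Matrix.fromBlocks A₁ (-A₂) A₂ A₁).mulVec w) := by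
  intro z w
  have h := hdiss (toC z) (toC w)
  rwa [toC_norm_sq, toC_norm_sq, dot_re, dot_mulVec_re, dot_mulVec_re] at h
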